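/- arXiv:math/0602278 — 3 statements merged into one kernel-verified Lean document; each statement's English description precedes it below -/
import Mathlib

section
/- Let θ > 0 and let X have the beta(θ,1) density θx^{θ-1} on (0,1). Define p₀(s) = e^{-s} and p₁(s) = ∫₀¹ ((e^{-sx} - e^{-s})/(1-x)) θ x^{θ-1} dx. Then p₁ is differentiable on (0,∞) with p₁'(s) = -p₁(s) + (θ/s^θ)·Γ(θ,0,s), where Γ(θ,0,s) = ∫₀^s e^{-t} t^{θ-1} dt is the lower incomplete gamma function. -/
open MeasureTheory Real Set intervalIntegral

lemma exp_neg_sub_le' {a b : ℝ} (ha : 0 ≤ a) (hab : a ≤ b) :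
    Real.exp (-a) - Real.exp (-b) ≤ b - a := by
  have h1 : Real.exp (-b) = Real.exp (-a) * Real.exp (a - b) := by
    rw [← Real.exp_add]; ring_nf
  have h2 : (a - b) + 1 ≤ Real.exp (a - b) := Real.add_one_le_exp _
  have h3 : Real.exp (-a) ≤ 1 := Real.exp_le_one_iff.2 (by linarith)
  have h4 : Real.exp (a - b) ≤ 1 := Real.exp_le_one_iff.2 (by linarith)
  nlinarith [Real.exp_pos (-a)]

/-- For the beta(θ,1) model, `p₁(s) = ∫₀¹ ((e^{-sx}-e^{-s})/(1-x)) θx^{θ-1} dx`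
is differentiable on `(0,∞)` with `p₁'(s) = -p₁(s) + (θ/s^θ)·∫₀^s e^{-t}t^{θ-1} dt`. -/
theorem stmt9 (θ : ℝ) (hθ : 0 < θ) (p₁ : ℝ → ℝ)
    (hp₁ : ∀ s : ℝ, p₁ s =
      ∫ x in Set.Ioo (0:ℝ) 1, ((Real.exp (-(s * x)) - Real.exp (-s)) / (1 - x)) * (θ * x ^ (θ - 1))) :
    ∀ s : ℝ, 0 < s →
      HasDerivAt p₁
        (-p₁ s + (θ / s ^ θ) * ∫ t in (0:ℝ)..s, Real.exp (-t) * t ^ (θ - 1)) s := by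
  intro s hs
  set μ := volume.restrict (Ioo (0:ℝ) 1) with hμ
  set F : ℝ → ℝ → ℝ := fun u x =>
    ((Real.exp (-(u * x)) - Real.exp (-u)) / (1 - x)) * (θ * x ^ (θ - 1)) with hF
  set F' : ℝ → ℝ → ℝ := fun u x =>
    -(F u x) + Real.exp (-(u * x)) * (θ * x ^ (θ - 1)) with hF'
  -- measurability facts
  have mF : ∀ u : ℝ, Measurable (F u) := fun u =>
    ((((measurable_id.const_mul u).neg.exp).sub measurable_const).div
      (measurable_const.sub measurable_id)).mul
      ((measurable_id.pow measurable_const).const_mul θ)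
  have mF' : ∀ u : ℝ, Measurable (F' u) := fun u =>
    (mF u).neg.add (((measurable_id.const_mul u).neg.exp).mul
      ((measurable_id.pow measurable_const).const_mul θ))
  -- integrability of the dominating function
  have hrpow_int : IntegrableOn (fun x : ℝ => x ^ (θ - 1)) (Ioo 0 1) := by
    have h := intervalIntegral.intervalIntegrable_rpow' (a := 0) (b := 1)
      (by linarith : (-1 : ℝ) < θ - 1)
    rw [intervalIntegrable_iff_integrableOn_Ioc_of_le zero_le_one] at h
    exact h.mono_set Ioo_subset_Ioc_self
  set bound : ℝ → ℝ := fun x => (3 * s / 2 + 1) * (θ * x ^ (θ - 1)) with hbound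
  have bound_int : Integrable bound μ := by
    simpa [hbound, mul_assoc] using ((hrpow_int.const_mul θ).const_mul (3 * s / 2 + 1))
  -- the basic pointwise bound on |F u x|
  have hC0 : ∀ x ∈ Ioo (0:ℝ) 1, 0 ≤ θ * x ^ (θ - 1) := fun x hx =>
    mul_nonneg hθ.le (Real.rpow_nonneg hx.1.le _)
  have hFle : ∀ x ∈ Ioo (0:ℝ) 1, ∀ u : ℝ, 0 < u →
      |F u x| ≤ u * (θ * x ^ (θ - 1)) := by
    intro x hx u hu0
    obtain ⟨hx0, hx1⟩ := hx
    have hC := hC0 x ⟨hx0, hx1⟩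
    have hux : u * x ≤ u := by nlinarith
    have hux0 : 0 ≤ u * x := by positivity
    have h1 : Real.exp (-(u * x)) - Real.exp (-u) ≤ u - u * x := exp_neg_sub_le' hux0 hux
    have h2 : 0 ≤ Real.exp (-(u * x)) - Real.exp (-u) := by
      have := Real.exp_le_exp.2 (neg_le_neg hux); linarith
    have hfx : F u x = ((Real.exp (-(u * x)) - Real.exp (-u)) / (1 - x)) * (θ * x ^ (θ - 1)) := rfl
    rw [hfx, abs_mul, abs_of_nonneg hC, abs_div, abs_of_nonneg h2,
      abs_of_pos (by linarith : (0:ℝ) < 1 - x)]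
    have hdivle : (Real.exp (-(u * x)) - Real.exp (-u)) / (1 - x) ≤ u := by
      rw [div_le_iff₀ (by linarith : (0:ℝ) < 1 - x)]
      nlinarith
    exact mul_le_mul_of_nonneg_right hdivle hC
  -- bound for F' on the ball, and differentiability
  have key : ∀ x ∈ Ioo (0:ℝ) 1, ∀ u ∈ Metric.ball s (s/2),
      ‖F' u x‖ ≤ bound x ∧ HasDerivAt (F · x) (F' u x) u := by
    intro x hx u hu
    obtain ⟨hx0, hx1⟩ := hx
    have hxne : (1 : ℝ) - x ≠ 0 := by linarith
    rw [Metric.mem_ball, Real.dist_eq, abs_sub_lt_iff] at hu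
    have hu0 : 0 < u := by linarith
    have hC : 0 ≤ θ * x ^ (θ - 1) := hC0 x ⟨hx0, hx1⟩
    constructor
    · have hFb := hFle x ⟨hx0, hx1⟩ u hu0
      have hux0 : 0 ≤ u * x := by positivity
      have hexple : Real.exp (-(u * x)) * (θ * x ^ (θ - 1)) ≤ 1 * (θ * x ^ (θ - 1)) :=
        mul_le_mul_of_nonneg_right (Real.exp_le_one_iff.2 (by linarith)) hC
      have htri : ‖F' u x‖ ≤ |F u x| + Real.exp (-(u * x)) * (θ * x ^ (θ - 1)) := by
        rw [hF', Real.norm_eq_abs]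
        refine (abs_add_le _ _).trans ?_
        rw [abs_neg, abs_of_nonneg (mul_nonneg (Real.exp_nonneg _) hC)]
      have hub : u ≤ 3 * s / 2 := by linarith
      calc ‖F' u x‖ ≤ |F u x| + Real.exp (-(u * x)) * (θ * x ^ (θ - 1)) := htri
        _ ≤ u * (θ * x ^ (θ - 1)) + 1 * (θ * x ^ (θ - 1)) := add_le_add hFb hexple
        _ ≤ (3 * s / 2) * (θ * x ^ (θ - 1)) + 1 * (θ * x ^ (θ - 1)) :=
            add_le_add (mul_le_mul_of_nonneg_right hub hC) le_rfl
        _ = bound x := by rw [hbound]; ring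
    · have d1 : HasDerivAt (fun u : ℝ => Real.exp (-(u * x)))
          (Real.exp (-(u * x)) * (-x)) u := by
        have h : HasDerivAt (fun u : ℝ => -(u * x)) (-x) u := by
          exact (((hasDerivAt_id' u).mul_const x).neg).congr_deriv (by ring)
        exact h.exp
      have d2 : HasDerivAt (fun u : ℝ => Real.exp (-u)) (Real.exp (-u) * (-1)) u := by
        have h : HasDerivAt (fun u : ℝ => -u) (-1 : ℝ) u := by
          exact (hasDerivAt_id' u).neg
        exact h.exp
      have d3 : HasDerivAt (F · x)
          (((Real.exp (-(u * x)) * (-x) - Real.exp (-u) * (-1)) / (1 - x)) * (θ * x ^ (θ - 1)))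
          u := ((d1.sub d2).div_const (1 - x)).mul_const _
      convert d3 using 1
      rw [hF', hF]
      field_simp
      ring
  -- integrability of F s
  have hFs_int : Integrable (F s) μ := by
    apply Integrable.mono' bound_int ((mF s).aestronglyMeasurable)
    filter_upwards [ae_restrict_mem measurableSet_Ioo] with x hx
    have h := hFle x hx s hs
    have hC := hC0 x hx
    rw [Real.norm_eq_abs]
    have : s * (θ * x ^ (θ - 1)) ≤ bound x := by
      rw [hbound]
      nlinarith
    linarith
  -- apply dominated differentiation
  have main := hasDerivAt_integral_of_dominated_loc_of_deriv_le
    (μ := μ) (F := F) (F' := F') (x₀ := s) (bound := bound) (Metric.ball_mem_nhds s (half_pos hs))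
    (Filter.Eventually.of_forall fun u => ((mF u).aestronglyMeasurable))
    hFs_int ((mF' s).aestronglyMeasurable)
    (by filter_upwards [ae_restrict_mem measurableSet_Ioo] with x hx u hu
        exact (key x hx u hu).1)
    bound_int
    (by filter_upwards [ae_restrict_mem measurableSet_Ioo] with x hx u hu
        exact (key x hx u hu).2)
  obtain ⟨hint', hderiv⟩ := main
  have hp₁eq : p₁ = fun u => ∫ x, F u x ∂μ := funext fun u => hp₁ u
  rw [hp₁eq]
  convert hderiv using 1
  case e'_4 => rfl
  case e'_5 => rfl
  -- compute ∫ F' s dμ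
  set g : ℝ → ℝ := fun x => Real.exp (-(s * x)) * (θ * x ^ (θ - 1)) with hg
  have mg : Measurable g := (((measurable_id.const_mul s).neg.exp).mul
    ((measurable_id.pow measurable_const).const_mul θ))
  have hg_int : Integrable g μ := by
    apply Integrable.mono' bound_int mg.aestronglyMeasurable
    filter_upwards [ae_restrict_mem measurableSet_Ioo] with x hx
    have hC := hC0 x hx
    have hsx : 0 ≤ s * x := by nlinarith [hx.1]
    have h1 : Real.exp (-(s * x)) ≤ 1 := Real.exp_le_one_iff.2 (by linarith)
    have : ‖g x‖ = Real.exp (-(s * x)) * (θ * x ^ (θ - 1)) := by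
      rw [hg, Real.norm_eq_abs]
      exact abs_of_nonneg (mul_nonneg (Real.exp_nonneg _) hC)
    rw [this, hbound]
    nlinarith
  have hsplit : ∫ x, F' s x ∂μ = -(∫ x, F s x ∂μ) + ∫ x, g x ∂μ := by
    have h := integral_add hFs_int.neg hg_int
    simp only [Pi.neg_apply] at h
    rw [MeasureTheory.integral_neg] at h
    exact h
  rw [hsplit]
  have hgθ : ∫ x, g x ∂μ = θ * ∫ x, Real.exp (-(s * x)) * x ^ (θ - 1) ∂μ := by
    rw [← MeasureTheory.integral_const_mul]
    congr 1
    funext x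
    rw [hg]; ring
  have hset : ∫ x, Real.exp (-(s * x)) * x ^ (θ - 1) ∂μ
      = ∫ x in (0:ℝ)..1, Real.exp (-(s * x)) * x ^ (θ - 1) := by
    rw [intervalIntegral.integral_of_le zero_le_one,
      MeasureTheory.integral_Ioc_eq_integral_Ioo]
  set J : ℝ := ∫ t in (0:ℝ)..s, Real.exp (-t) * t ^ (θ - 1) with hJ
  have hsub : ∫ x in (0:ℝ)..1, Real.exp (-(s * x)) * (s * x) ^ (θ - 1) = s⁻¹ * J := by
    have h := intervalIntegral.integral_comp_mul_left (a := (0:ℝ)) (b := 1)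
      (f := fun t => Real.exp (-t) * t ^ (θ - 1)) (c := s) hs.ne'
    simpa [hJ] using h
  have hpow : ∫ x in (0:ℝ)..1, Real.exp (-(s * x)) * (s * x) ^ (θ - 1)
      = s ^ (θ - 1) * ∫ x in (0:ℝ)..1, Real.exp (-(s * x)) * x ^ (θ - 1) := by
    rw [← intervalIntegral.integral_const_mul]
    apply intervalIntegral.integral_congr
    intro x hx
    rw [Set.uIcc_of_le zero_le_one] at hx
    show Real.exp (-(s * x)) * (s * x) ^ (θ - 1)
        = s ^ (θ - 1) * (Real.exp (-(s * x)) * x ^ (θ - 1))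
    rw [Real.mul_rpow hs.le hx.1]; ring
  have hsθ : s ^ θ = s ^ (θ - 1) * s := by
    rw [← Real.rpow_add_one hs.ne' (θ - 1)]; ring_nf
  have hsp : (0:ℝ) < s ^ (θ - 1) := Real.rpow_pos_of_pos hs _
  have halg : ∀ Kv : ℝ, s ^ (θ - 1) * Kv = s⁻¹ * J → (θ / s ^ θ) * J = θ * Kv := by
    intro Kv hKv
    have hJ2 : J = s * (s ^ (θ - 1) * Kv) := by rw [hKv]; field_simp
    rw [hsθ, hJ2]; field_simp
  have hfinal := halg _ (by rw [← hpow, hsub])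
  rw [hfinal, ← hset, ← hgθ]
end

section
/- Let θ > 0 and let p₀(s) = e^{-s}, p₁(s) = ∫₀¹ ((e^{-sx} - e^{-s})/(1-x)) θ x^{θ-1} dx. Then for all s > 0: s·p₁''(s) + (s + θ)·p₁'(s) = θ·(p₀(s) - p₁(s)). -/
open MeasureTheory Real Set

namespace Stmt10Aux

/-- |exp a - exp b| ≤ |a - b| * exp (max a b) -/
lemma abs_exp_sub_exp_le (a b : ℝ) :
    |Real.exp a - Real.exp b| ≤ |a - b| * Real.exp (max a b) := by
  wlog h : b ≤ a with H
  · have := H b a (le_of_not_ge h)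
    rwa [abs_sub_comm (Real.exp b), abs_sub_comm b a, max_comm b a] at this
  have key : Real.exp a - Real.exp b ≤ (a - b) * Real.exp a := by
    have h1 : Real.exp b = Real.exp a * Real.exp (b - a) := by
      rw [← Real.exp_add]; ring_nf
    have h2 := Real.add_one_le_exp (b - a)
    nlinarith [Real.exp_pos a]
  have h0 : 0 ≤ Real.exp a - Real.exp b := by
    have := Real.exp_le_exp.mpr h; linarith
  rw [abs_of_nonneg h0, abs_of_nonneg (by linarith), max_eq_left h]
  exact key

lemma int_rpow {θ : ℝ} (hθ : 0 < θ) :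
    IntegrableOn (fun x : ℝ => x ^ (θ - 1)) (Set.Ioo (0:ℝ) 1) := by
  have h : IntervalIntegrable (fun x : ℝ => x ^ (θ - 1)) volume 0 1 :=
    intervalIntegral.intervalIntegrable_rpow' (by linarith)
  rw [intervalIntegrable_iff_integrableOn_Ioo_of_le (by norm_num)] at h
  exact h


lemma exp_bnd {s x : ℝ} (hx : x ∈ Set.Ioo (0:ℝ) 1) :
    Real.exp (-(s * x)) ≤ Real.exp |s| := by
  apply Real.exp_le_exp.mpr
  calc -(s * x) ≤ |s * x| := neg_le_abs _
  _ = |s| * x := by rw [abs_mul, abs_of_pos hx.1]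
  _ ≤ |s| * 1 := by nlinarith [abs_nonneg s, hx.2]
  _ = |s| := mul_one _

lemma bnd1 {s x : ℝ} (hx : x ∈ Set.Ioo (0:ℝ) 1) :
    |(Real.exp (-(s * x)) - Real.exp (-s)) / (1 - x)| ≤ |s| * Real.exp |s| := by
  have h1x : 0 < 1 - x := by linarith [hx.2]
  rw [abs_div, abs_of_pos h1x, div_le_iff₀ h1x]
  have key := abs_exp_sub_exp_le (-(s * x)) (-s)
  have h1 : |(-(s * x)) - (-s)| = |s| * (1 - x) := by
    have : (-(s * x)) - (-s) = s * (1 - x) := by ring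
    rw [this, abs_mul, abs_of_pos h1x]
  have h2 : Real.exp (max (-(s * x)) (-s)) ≤ Real.exp |s| := by
    apply Real.exp_le_exp.mpr
    apply max_le
    · calc -(s * x) ≤ |s * x| := neg_le_abs _
      _ = |s| * x := by rw [abs_mul, abs_of_pos hx.1]
      _ ≤ |s| * 1 := by nlinarith [abs_nonneg s, hx.2]
      _ = |s| := mul_one _
    · exact le_trans (neg_le_abs s) (le_refl _)
  calc |Real.exp (-(s * x)) - Real.exp (-s)| ≤ |(-(s * x)) - (-s)| * Real.exp (max (-(s * x)) (-s)) := key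
  _ ≤ (|s| * (1 - x)) * Real.exp |s| := by
      rw [h1]
      apply mul_le_mul_of_nonneg_left h2
      positivity
  _ = |s| * Real.exp |s| * (1 - x) := by ring

lemma integrable_dom {θ : ℝ} (hθ : 0 < θ) {f : ℝ → ℝ} (hf : ContinuousOn f (Set.Ioo 0 1)) (C : ℝ)
    (hb : ∀ x ∈ Set.Ioo (0:ℝ) 1, ‖f x‖ ≤ C * (θ * x ^ (θ - 1))) :
    IntegrableOn f (Set.Ioo (0:ℝ) 1) := by
  apply Integrable.mono' (((int_rpow hθ).const_mul θ).const_mul C)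
    (hf.aestronglyMeasurable measurableSet_Ioo)
  filter_upwards [ae_restrict_mem measurableSet_Ioo] with x hx
  exact hb x hx

lemma cont_rpow {θ : ℝ} (hθ : 0 < θ) :
    ContinuousOn (fun x : ℝ => θ * x ^ (θ - 1)) (Set.Ioo (0:ℝ) 1) := by
  apply continuousOn_const.mul
  intro x hx
  exact (Real.continuousAt_rpow_const x _ (Or.inl hx.1.ne')).continuousWithinAt

lemma cont_gg {θ s : ℝ} (hθ : 0 < θ) :
    ContinuousOn (fun x : ℝ => Real.exp (-(s * x)) * (θ * x ^ (θ - 1))) (Set.Ioo (0:ℝ) 1) :=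
  (Continuous.continuousOn (by continuity)).mul (cont_rpow hθ)

lemma int_gg {θ : ℝ} (hθ : 0 < θ) (s : ℝ) :
    IntegrableOn (fun x : ℝ => Real.exp (-(s * x)) * (θ * x ^ (θ - 1))) (Set.Ioo (0:ℝ) 1) := by
  apply integrable_dom hθ (cont_gg hθ) (Real.exp |s|)
  intro x hx
  have h1 : (0:ℝ) ≤ θ * x ^ (θ - 1) := mul_nonneg hθ.le (Real.rpow_nonneg hx.1.le _)
  rw [Real.norm_eq_abs, abs_mul, abs_of_nonneg h1, abs_of_pos (Real.exp_pos _)]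
  exact mul_le_mul_of_nonneg_right (exp_bnd hx) h1

lemma cont_GG {θ s : ℝ} (hθ : 0 < θ) :
    ContinuousOn (fun x : ℝ => -(x * Real.exp (-(s * x)) * (θ * x ^ (θ - 1)))) (Set.Ioo (0:ℝ) 1) :=
  ((Continuous.continuousOn (by continuity)).mul (cont_rpow hθ)).neg

lemma int_GG {θ : ℝ} (hθ : 0 < θ) (s : ℝ) :
    IntegrableOn (fun x : ℝ => -(x * Real.exp (-(s * x)) * (θ * x ^ (θ - 1)))) (Set.Ioo (0:ℝ) 1) := by
  apply integrable_dom hθ (cont_GG hθ) (Real.exp |s|)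
  intro x hx
  have h1 : (0:ℝ) ≤ θ * x ^ (θ - 1) := mul_nonneg hθ.le (Real.rpow_nonneg hx.1.le _)
  rw [Real.norm_eq_abs, abs_neg, abs_mul, abs_mul, abs_of_nonneg h1, abs_of_pos hx.1,
    abs_of_pos (Real.exp_pos _)]
  have h2 : x * Real.exp (-(s * x)) ≤ Real.exp |s| :=
    le_trans (mul_le_of_le_one_left (Real.exp_pos _).le hx.2.le) (exp_bnd hx)
  exact mul_le_mul_of_nonneg_right h2 h1

lemma cont_P {θ s : ℝ} (hθ : 0 < θ) :
    ContinuousOn (fun x : ℝ =>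
      ((Real.exp (-(s * x)) - Real.exp (-s)) / (1 - x)) * (θ * x ^ (θ - 1))) (Set.Ioo (0:ℝ) 1) := by
  apply ContinuousOn.mul _ (cont_rpow hθ)
  apply ContinuousOn.div (Continuous.continuousOn (by continuity))
    (Continuous.continuousOn (by continuity))
  intro x hx
  have : (0:ℝ) < 1 - x := by linarith [hx.2]
  exact this.ne'

lemma int_P {θ : ℝ} (hθ : 0 < θ) (s : ℝ) :
    IntegrableOn (fun x : ℝ =>
      ((Real.exp (-(s * x)) - Real.exp (-s)) / (1 - x)) * (θ * x ^ (θ - 1))) (Set.Ioo (0:ℝ) 1) := by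
  apply integrable_dom hθ (cont_P hθ) (|s| * Real.exp |s|)
  intro x hx
  have h1 : (0:ℝ) ≤ θ * x ^ (θ - 1) := mul_nonneg hθ.le (Real.rpow_nonneg hx.1.le _)
  rw [Real.norm_eq_abs, abs_mul, abs_of_nonneg h1]
  exact mul_le_mul_of_nonneg_right (bnd1 hx) h1

noncomputable def gg (θ s : ℝ) : ℝ :=
  ∫ x in Set.Ioo (0:ℝ) 1, Real.exp (-(s * x)) * (θ * x ^ (θ - 1))

noncomputable def GG (θ s : ℝ) : ℝ :=
  ∫ x in Set.Ioo (0:ℝ) 1, -(x * Real.exp (-(s * x)) * (θ * x ^ (θ - 1)))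

noncomputable def P (θ s : ℝ) : ℝ :=
  ∫ x in Set.Ioo (0:ℝ) 1, ((Real.exp (-(s * x)) - Real.exp (-s)) / (1 - x)) * (θ * x ^ (θ - 1))

lemma cont_P' {θ s : ℝ} (hθ : 0 < θ) :
    ContinuousOn (fun x : ℝ =>
      (Real.exp (-(s * x)) - (Real.exp (-(s * x)) - Real.exp (-s)) / (1 - x)) * (θ * x ^ (θ - 1)))
      (Set.Ioo (0:ℝ) 1) := by
  apply ContinuousOn.mul _ (cont_rpow hθ)
  apply ContinuousOn.sub (Continuous.continuousOn (by continuity))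
  apply ContinuousOn.div (Continuous.continuousOn (by continuity))
    (Continuous.continuousOn (by continuity))
  intro x hx
  have : (0:ℝ) < 1 - x := by linarith [hx.2]
  exact this.ne'

lemma hasDerivAt_P {θ : ℝ} (hθ : 0 < θ) (s₀ : ℝ) :
    HasDerivAt (P θ) (gg θ s₀ - P θ s₀) s₀ := by
  have habs : ∀ s ∈ Metric.ball s₀ 1, |s| ≤ |s₀| + 1 := by
    intro s hs
    have := abs_sub_abs_le_abs_sub s s₀
    rw [Metric.mem_ball, Real.dist_eq] at hs
    linarith
  have key := (hasDerivAt_integral_of_dominated_loc_of_deriv_le (F := fun s x =>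
      ((Real.exp (-(s * x)) - Real.exp (-s)) / (1 - x)) * (θ * x ^ (θ - 1)))
      (F' := fun s x =>
        (Real.exp (-(s * x)) - (Real.exp (-(s * x)) - Real.exp (-s)) / (1 - x)) * (θ * x ^ (θ - 1)))
      (bound := fun x => (Real.exp (|s₀| + 1) + (|s₀| + 1) * Real.exp (|s₀| + 1)) * (θ * x ^ (θ - 1)))
      (μ := volume.restrict (Set.Ioo (0:ℝ) 1)) (Metric.ball_mem_nhds s₀ one_pos)
      (Filter.Eventually.of_forall fun s =>
        (cont_P hθ).aestronglyMeasurable measurableSet_Ioo)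
      (int_P hθ s₀)
      ((cont_P' hθ).aestronglyMeasurable measurableSet_Ioo)
      ?_ ?_ ?_).2
  · have heq : (∫ x in Set.Ioo (0:ℝ) 1,
        (Real.exp (-(s₀ * x)) - (Real.exp (-(s₀ * x)) - Real.exp (-s₀)) / (1 - x))
          * (θ * x ^ (θ - 1))) = gg θ s₀ - P θ s₀ := by
      rw [gg, P, ← integral_sub (int_gg hθ s₀) (int_P hθ s₀)]
      congr 1
      funext x
      ring
    rwa [heq] at key
  · filter_upwards [ae_restrict_mem measurableSet_Ioo] with x hx
    intro s hs
    have h1 : (0:ℝ) ≤ θ * x ^ (θ - 1) := mul_nonneg hθ.le (Real.rpow_nonneg hx.1.le _)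
    rw [Real.norm_eq_abs, abs_mul, abs_of_nonneg h1]
    apply mul_le_mul_of_nonneg_right _ h1
    have hsa := habs s hs
    have hE : Real.exp |s| ≤ Real.exp (|s₀| + 1) := Real.exp_le_exp.mpr hsa
    have h2 : Real.exp (-(s * x)) ≤ Real.exp (|s₀| + 1) := le_trans (exp_bnd hx) hE
    have h3 : |(Real.exp (-(s * x)) - Real.exp (-s)) / (1 - x)| ≤ (|s₀| + 1) * Real.exp (|s₀| + 1) := by
      refine le_trans (bnd1 hx) ?_
      have h4 : (0:ℝ) ≤ |s| := abs_nonneg s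
      nlinarith [Real.exp_pos |s|]
    calc |Real.exp (-(s * x)) - (Real.exp (-(s * x)) - Real.exp (-s)) / (1 - x)|
        ≤ |Real.exp (-(s * x))| + |(Real.exp (-(s * x)) - Real.exp (-s)) / (1 - x)| := abs_sub _ _
      _ ≤ Real.exp (|s₀| + 1) + (|s₀| + 1) * Real.exp (|s₀| + 1) := by
          rw [abs_of_pos (Real.exp_pos _)]
          exact add_le_add h2 h3
  · exact ((int_rpow hθ).const_mul θ).const_mul _
  · filter_upwards [ae_restrict_mem measurableSet_Ioo] with x hx
    intro s hs
    have h1x : (1:ℝ) - x ≠ 0 := by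
      have : (0:ℝ) < 1 - x := by linarith [hx.2]
      exact this.ne'
    have h1 : HasDerivAt (fun s : ℝ => -(s * x)) (-x) s := by
      exact HasDerivAt.neg (by simpa using (hasDerivAt_id s).mul_const x)
    have h2 : HasDerivAt (fun s : ℝ => -s) (-1 : ℝ) s := hasDerivAt_neg s
    have h3 := (((h1.exp.sub h2.exp).div_const (1 - x)).mul_const (θ * x ^ (θ - 1)))
    refine h3.congr_deriv ?_
    field_simp
    ring

lemma hasDerivAt_gg {θ : ℝ} (hθ : 0 < θ) (s₀ : ℝ) :
    HasDerivAt (gg θ) (GG θ s₀) s₀ := by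
  have habs : ∀ s ∈ Metric.ball s₀ 1, |s| ≤ |s₀| + 1 := by
    intro s hs
    have := abs_sub_abs_le_abs_sub s s₀
    rw [Metric.mem_ball, Real.dist_eq] at hs
    linarith
  have := (hasDerivAt_integral_of_dominated_loc_of_deriv_le (F := fun s x =>
      Real.exp (-(s * x)) * (θ * x ^ (θ - 1)))
      (F' := fun s x => -(x * Real.exp (-(s * x)) * (θ * x ^ (θ - 1))))
      (bound := fun x => Real.exp (|s₀| + 1) * (θ * x ^ (θ - 1)))
      (μ := volume.restrict (Set.Ioo (0:ℝ) 1)) (Metric.ball_mem_nhds s₀ one_pos)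
      (Filter.Eventually.of_forall fun s =>
        (cont_gg hθ).aestronglyMeasurable measurableSet_Ioo)
      (int_gg hθ s₀)
      ((cont_GG hθ).aestronglyMeasurable measurableSet_Ioo)
      ?_ ?_ ?_).2
  · exact this
  · filter_upwards [ae_restrict_mem measurableSet_Ioo] with x hx
    intro s hs
    have h1 : (0:ℝ) ≤ θ * x ^ (θ - 1) := mul_nonneg hθ.le (Real.rpow_nonneg hx.1.le _)
    rw [Real.norm_eq_abs, abs_neg, abs_mul, abs_mul, abs_of_nonneg h1, abs_of_pos hx.1,
      abs_of_pos (Real.exp_pos _)]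
    have h2 : Real.exp (-(s * x)) ≤ Real.exp (|s₀| + 1) :=
      le_trans (exp_bnd hx) (Real.exp_le_exp.mpr (habs s hs))
    have h3 : x * Real.exp (-(s * x)) ≤ Real.exp (|s₀| + 1) :=
      le_trans (mul_le_of_le_one_left (Real.exp_pos _).le hx.2.le) h2
    exact mul_le_mul_of_nonneg_right h3 h1
  · exact ((int_rpow hθ).const_mul θ).const_mul _
  · filter_upwards [ae_restrict_mem measurableSet_Ioo] with x hx
    intro s hs
    have h1 : HasDerivAt (fun s : ℝ => -(s * x)) (-x) s := by
      exact HasDerivAt.neg (by simpa using (hasDerivAt_id s).mul_const x)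
    have h2 := (h1.exp).mul_const (θ * x ^ (θ - 1))
    refine h2.congr_deriv ?_
    ring

lemma ibp {θ : ℝ} (hθ : 0 < θ) (s : ℝ) :
    θ * gg θ s + s * GG θ s = θ * Real.exp (-s) := by
  set f : ℝ → ℝ := fun x => x ^ θ * Real.exp (-(s * x)) with hf
  set f' : ℝ → ℝ := fun x =>
    θ * x ^ (θ - 1) * Real.exp (-(s * x)) + x ^ θ * (Real.exp (-(s * x)) * (-s)) with hf'
  have hcont : ContinuousOn f (Set.Icc 0 1) := by
    apply ContinuousOn.mul
    · intro x _
      exact (Real.continuousAt_rpow_const x θ (Or.inr hθ.le)).continuousWithinAt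
    · exact Continuous.continuousOn (by continuity)
  have hderiv : ∀ x ∈ Set.Ioo (0:ℝ) 1, HasDerivAt f (f' x) x := by
    intro x hx
    have h1 : HasDerivAt (fun x : ℝ => x ^ θ) (θ * x ^ (θ - 1)) x := by
      simpa [mul_comm] using Real.hasDerivAt_rpow_const (x := x) (p := θ) (Or.inl hx.1.ne')
    have h2 : HasDerivAt (fun x : ℝ => -(s * x)) (-s) x := by
      exact HasDerivAt.neg (by simpa using (hasDerivAt_id x).const_mul s)
    exact h1.mul h2.exp
  have t1 : IntegrableOn (fun x : ℝ => θ * x ^ (θ - 1) * Real.exp (-(s * x)))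
      (Set.Ioo (0:ℝ) 1) := by
    have heq : (fun x : ℝ => θ * x ^ (θ - 1) * Real.exp (-(s * x)))
        = fun x => Real.exp (-(s * x)) * (θ * x ^ (θ - 1)) := by funext x; ring
    rw [heq]; exact int_gg hθ s
  have t2 : IntegrableOn (fun x : ℝ => x ^ θ * (Real.exp (-(s * x)) * (-s)))
      (Set.Ioo (0:ℝ) 1) := by
    apply IntegrableOn.mono_set _ Set.Ioo_subset_Icc_self
    apply ContinuousOn.integrableOn_Icc
    apply ContinuousOn.mul
    · intro x _
      exact (Real.continuousAt_rpow_const x θ (Or.inr hθ.le)).continuousWithinAt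
    · exact Continuous.continuousOn (by continuity)
  have hint : IntervalIntegrable f' volume 0 1 := by
    rw [intervalIntegrable_iff_integrableOn_Ioo_of_le (by norm_num)]
    exact t1.add t2
  have hFTC := intervalIntegral.integral_eq_sub_of_hasDerivAt_of_le (by norm_num : (0:ℝ) ≤ 1)
    hcont hderiv hint
  have hf1 : f 1 = Real.exp (-s) := by simp [hf, Real.one_rpow]
  have hf0 : f 0 = 0 := by simp [hf, Real.zero_rpow hθ.ne']
  rw [hf1, hf0, intervalIntegral.integral_of_le (by norm_num : (0:ℝ) ≤ 1),
    integral_Ioc_eq_integral_Ioo] at hFTC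
  have hsplit : (∫ x in Set.Ioo (0:ℝ) 1, f' x)
      = (∫ x in Set.Ioo (0:ℝ) 1, θ * x ^ (θ - 1) * Real.exp (-(s * x)))
        + ∫ x in Set.Ioo (0:ℝ) 1, x ^ θ * (Real.exp (-(s * x)) * (-s)) :=
    integral_add t1 t2
  have hgg : (∫ x in Set.Ioo (0:ℝ) 1, θ * x ^ (θ - 1) * Real.exp (-(s * x))) = gg θ s := by
    rw [gg]; congr 1; funext x; ring
  have hGG : (∫ x in Set.Ioo (0:ℝ) 1, x ^ θ * (Real.exp (-(s * x)) * (-s)))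
      = (s / θ) * GG θ s := by
    rw [GG, ← integral_const_mul]
    apply setIntegral_congr_fun measurableSet_Ioo
    intro x hx
    have hxpow : x ^ θ = x * x ^ (θ - 1) := by
      rw [show θ = 1 + (θ - 1) by ring, Real.rpow_add hx.1, Real.rpow_one]
      ring_nf
    show x ^ θ * (Real.exp (-(s * x)) * (-s))
      = s / θ * -(x * Real.exp (-(s * x)) * (θ * x ^ (θ - 1)))
    rw [hxpow]
    field_simp
  rw [hsplit, hgg, hGG] at hFTC
  have hθ' : θ ≠ 0 := hθ.ne'
  field_simp at hFTC ⊢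
  linarith

end Stmt10Aux

open Stmt10Aux

/-- For the beta(θ,1) model, with `p₀(s) = e^{-s}` and
`p₁(s) = ∫₀¹ ((e^{-sx}-e^{-s})/(1-x)) θx^{θ-1} dx`, one has for all `s > 0`
`s·p₁''(s) + (s+θ)·p₁'(s) = θ·(p₀(s) - p₁(s))`. -/
theorem stmt10 (θ : ℝ) (hθ : 0 < θ) (p₀ p₁ : ℝ → ℝ)
    (hp₀ : ∀ s : ℝ, p₀ s = Real.exp (-s))
    (hp₁ : ∀ s : ℝ, p₁ s =
      ∫ x in Set.Ioo (0:ℝ) 1, ((Real.exp (-(s * x)) - Real.exp (-s)) / (1 - x)) * (θ * x ^ (θ - 1))) :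
    ∀ s : ℝ, 0 < s →
      s * deriv (deriv p₁) s + (s + θ) * deriv p₁ s = θ * (p₀ s - p₁ s) := by
  have hP : p₁ = P θ := funext fun s => hp₁ s
  subst hP
  intro s hs
  have hd1 : ∀ t : ℝ, deriv (P θ) t = gg θ t - P θ t := fun t =>
    (hasDerivAt_P hθ t).deriv
  have hd2 : deriv (deriv (P θ)) s = GG θ s - (gg θ s - P θ s) := by
    have : deriv (P θ) = fun t => gg θ t - P θ t := funext hd1
    rw [this]
    exact (((hasDerivAt_gg hθ s).sub (hasDerivAt_P hθ s))).deriv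
  rw [hd2, hd1, hp₀]
  have := ibp hθ s
  ring_nf
  ring_nf at this
  linarith
end

section
/- Let X be uniform on (0,1), let s* be the root of ∫₀^s (e^t-1)/t dt = 1, and define v(∞, s*) = (e^{s*} - s* - 1)·∫_{s*}^∞ (e^{-t}/t) dt + e^{-s*}. Then 0.58 < v(∞, s*) < 0.581. -/
open MeasureTheory Real Set intervalIntegral

namespace Stmt14Aux

noncomputable def eS (n : ℕ) (t : ℝ) : ℝ :=
  ∑ i ∈ Finset.range n, (-1)^i * t^i / (Nat.factorial i : ℝ)

noncomputable def eT (N : ℕ) (t : ℝ) : ℝ :=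
  ∑ j ∈ Finset.range N, (-1)^(j+1) * t^(j+1) / (((j:ℝ)+1) * (Nat.factorial (j+1) : ℝ))

lemma continuous_eS (n : ℕ) : Continuous (fun t => eS n t) := by
  unfold eS
  exact continuous_finset_sum _ (fun i _ => (continuous_const.mul (continuous_pow i)).div_const _)

lemma hasDerivAt_eS (n : ℕ) (t : ℝ) : HasDerivAt (fun x => eS (n+1) x) (-(eS n t)) t := by
  have h : HasDerivAt (fun x => eS (n+1) x)
      (∑ i ∈ Finset.range (n+1), (-1:ℝ)^i * ((i:ℝ) * t^(i-1)) / (Nat.factorial i : ℝ)) t := by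
    unfold eS
    apply HasDerivAt.fun_sum
    intro i _
    exact ((hasDerivAt_pow i t).const_mul ((-1:ℝ)^i)).div_const _
  convert h using 1
  rw [Finset.sum_range_succ']
  unfold eS
  have key : ∀ i ∈ Finset.range n,
      (-1:ℝ)^(i+1) * (((i+1 : ℕ):ℝ) * t^((i+1)-1)) / (Nat.factorial (i+1) : ℝ)
        = -((-1:ℝ)^i * t^i / (Nat.factorial i : ℝ)) := by
    intro i _
    have h1 : (Nat.factorial (i+1) : ℝ) = ((i:ℝ)+1) * (Nat.factorial i : ℝ) := by
      rw [Nat.factorial_succ]; push_cast; ring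
    have h2 : ((i:ℝ)+1) ≠ 0 := by positivity
    have h3 : (Nat.factorial i : ℝ) ≠ 0 := Nat.cast_ne_zero.mpr (Nat.factorial_ne_zero i)
    rw [h1, pow_succ, Nat.add_sub_cancel]
    push_cast
    field_simp
  rw [Finset.sum_congr rfl key]
  simp

lemma eS_succ_zero (n : ℕ) : eS (n+1) 0 = 1 := by
  unfold eS
  rw [Finset.sum_range_succ']
  simp

lemma alt (n : ℕ) : ∀ t : ℝ, 0 ≤ t → 0 ≤ (-1:ℝ)^n * (Real.exp (-t) - eS n t) := by
  induction n with
  | zero =>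
    intro t _
    simp [eS, (Real.exp_pos _).le]
  | succ n ih =>
    intro t ht
    set h : ℝ → ℝ := fun x => (-1:ℝ)^(n+1) * (Real.exp (-x) - eS (n+1) x) with hh
    have hd : ∀ x : ℝ, HasDerivAt h ((-1:ℝ)^n * (Real.exp (-x) - eS n x)) x := by
      intro x
      have h1 : HasDerivAt (fun y:ℝ => Real.exp (-y)) (-Real.exp (-x)) x := by
        simpa using (hasDerivAt_neg x).exp
      have h2 := (h1.sub (hasDerivAt_eS n x)).const_mul ((-1:ℝ)^(n+1))
      refine h2.congr_deriv (Eq.symm ?_)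
      rw [pow_succ]
      ring
    have hdiff : Differentiable ℝ h := fun x => (hd x).differentiableAt
    have hmono : MonotoneOn h (Ici 0) := by
      apply monotoneOn_of_deriv_nonneg (convex_Ici 0) hdiff.continuous.continuousOn
        (hdiff.differentiableOn)
      intro x hx
      rw [interior_Ici] at hx
      rw [(hd x).deriv]
      exact ih x (le_of_lt hx)
    have h0 : h 0 = 0 := by
      simp [hh, eS_succ_zero]
    have := hmono (self_mem_Ici) (mem_Ici.mpr ht) ht
    rw [h0] at this
    exact this

lemma exp_neg_le_eS {n : ℕ} (hn : Odd n) {t : ℝ} (ht : 0 ≤ t) : Real.exp (-t) ≤ eS n t := by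
  have := alt n t ht
  rw [hn.neg_one_pow] at this
  linarith

lemma eS_le_exp_neg {n : ℕ} (hn : Even n) {t : ℝ} (ht : 0 ≤ t) : eS n t ≤ Real.exp (-t) := by
  have := alt n t ht
  rw [hn.neg_one_pow] at this
  linarith

lemma hasDerivAt_logT (N : ℕ) {t : ℝ} (ht : 0 < t) :
    HasDerivAt (fun x => Real.log x + eT N x) (eS (N+1) t / t) t := by
  have h1 : HasDerivAt Real.log t⁻¹ t := Real.hasDerivAt_log ht.ne'
  have h2 : HasDerivAt (fun x => eT N x)
      (∑ j ∈ Finset.range N, (-1:ℝ)^(j+1) * t^j / (Nat.factorial (j+1) : ℝ)) t := by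
    have h3 : HasDerivAt (fun x => eT N x)
        (∑ j ∈ Finset.range N,
          (-1:ℝ)^(j+1) * (((j+1:ℕ):ℝ) * t^((j+1)-1)) / (((j:ℝ)+1) * (Nat.factorial (j+1) : ℝ))) t := by
      unfold eT
      apply HasDerivAt.fun_sum
      intro j _
      exact ((hasDerivAt_pow (j+1) t).const_mul ((-1:ℝ)^(j+1))).div_const _
    convert h3 using 1
    apply Finset.sum_congr rfl
    intro j _
    have h2j : ((j:ℝ)+1) ≠ 0 := by positivity
    have h3j : (Nat.factorial (j+1) : ℝ) ≠ 0 := Nat.cast_ne_zero.mpr (Nat.factorial_ne_zero _)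
    rw [Nat.add_sub_cancel]
    push_cast
    field_simp
  have h4 := h1.add h2
  refine h4.congr_deriv (Eq.symm ?_)
  unfold eS
  rw [Finset.sum_range_succ']
  rw [div_eq_iff ht.ne', add_mul, inv_mul_cancel₀ ht.ne', Finset.sum_mul]
  simp only [pow_zero, one_mul, Nat.factorial_zero, Nat.cast_one, div_one, mul_one]
  rw [add_comm]
  congr 1
  apply Finset.sum_congr rfl
  intro j _
  rw [pow_succ]
  ring

lemma integral_eS_div (N : ℕ) {x y : ℝ} (hx : 0 < x) (hxy : x ≤ y) :
    ∫ t in x..y, eS (N+1) t / t = (Real.log y + eT N y) - (Real.log x + eT N x) := by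
  apply intervalIntegral.integral_eq_sub_of_hasDerivAt
  · intro t ht
    rw [uIcc_of_le hxy] at ht
    exact hasDerivAt_logT N (lt_of_lt_of_le hx ht.1)
  · apply ContinuousOn.intervalIntegrable
    apply ContinuousOn.div (continuous_eS _).continuousOn continuousOn_id
    intro t ht
    rw [uIcc_of_le hxy] at ht
    exact (lt_of_lt_of_le hx ht.1).ne'

lemma integrableOn_f {x : ℝ} (hx : 0 < x) :
    IntegrableOn (fun t => Real.exp (-t) / t) (Ioi x) := by
  have hg : IntegrableOn (fun t => x⁻¹ * Real.exp (-(1:ℝ) * t)) (Ioi x) :=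
    (exp_neg_integrableOn_Ioi x one_pos).const_mul x⁻¹
  apply hg.integrable.mono'
  · apply ContinuousOn.aestronglyMeasurable _ measurableSet_Ioi
    apply ContinuousOn.div (Real.continuous_exp.comp continuous_neg).continuousOn continuousOn_id
    intro t ht
    exact (lt_trans hx ht).ne'
  · filter_upwards [ae_restrict_mem measurableSet_Ioi] with t ht
    have ht' : x < t := ht
    have h1 : (0:ℝ) < t := lt_trans hx ht'
    rw [Real.norm_eq_abs, abs_of_nonneg (by positivity)]
    rw [div_eq_inv_mul, neg_one_mul]
    gcongr

lemma split_integral {x c : ℝ} (hx : 0 < x) (hxc : x ≤ c) :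
    ∫ t in Ioi x, Real.exp (-t) / t
      = (∫ t in x..c, Real.exp (-t) / t) + ∫ t in Ioi c, Real.exp (-t) / t := by
  rw [intervalIntegral.integral_of_le hxc,
    ← MeasureTheory.setIntegral_union Ioc_disjoint_Ioi_same measurableSet_Ioi
      ((integrableOn_f hx).mono_set Ioc_subset_Ioi_self) (integrableOn_f (lt_of_lt_of_le hx hxc)),
    Ioc_union_Ioi_eq_Ioi hxc]

lemma tail_nonneg (c : ℝ) (hc : 0 < c) : 0 ≤ ∫ t in Ioi c, Real.exp (-t) / t := by
  apply setIntegral_nonneg measurableSet_Ioi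
  intro t ht
  have : (0:ℝ) < t := lt_trans hc ht
  positivity

lemma tail_le : (∫ t in Ioi (10:ℝ), Real.exp (-t) / t) ≤ Real.exp (-10) / 10 := by
  have h1 : (∫ t in Ioi (10:ℝ), Real.exp (-t) / t) ≤ ∫ t in Ioi (10:ℝ), (10:ℝ)⁻¹ * Real.exp (-t) := by
    have hInt : IntegrableOn (fun t => (10:ℝ)⁻¹ * Real.exp (-t)) (Ioi (10:ℝ)) := by
      have h0 : IntegrableOn (fun t => (10:ℝ)⁻¹ * Real.exp (-(1:ℝ)*t)) (Ioi (10:ℝ)) :=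
        (exp_neg_integrableOn_Ioi 10 one_pos).const_mul (10:ℝ)⁻¹
      exact h0.congr_fun (fun t _ => by simp only [neg_one_mul]) measurableSet_Ioi
    apply setIntegral_mono_on (integrableOn_f (by norm_num)) hInt measurableSet_Ioi
    intro t ht
    have ht' : (10:ℝ) < t := ht
    rw [div_eq_inv_mul]
    gcongr
  rw [MeasureTheory.integral_const_mul, integral_exp_neg_Ioi] at h1
  calc (∫ t in Ioi (10:ℝ), Real.exp (-t) / t) ≤ (10:ℝ)⁻¹ * Real.exp (-10) := h1
  _ = Real.exp (-10) / 10 := by ring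

lemma E1_mono {x y : ℝ} (hx : 0 < x) (hxy : x ≤ y) :
    (∫ t in Ioi y, Real.exp (-t) / t) ≤ ∫ t in Ioi x, Real.exp (-t) / t := by
  rw [split_integral hx hxy]
  have h : 0 ≤ ∫ t in x..y, Real.exp (-t) / t := by
    apply intervalIntegral.integral_nonneg hxy
    intro t ht
    have : (0:ℝ) < t := lt_of_lt_of_le hx ht.1
    positivity
  linarith

lemma g_intble {x : ℝ} (hx : 0 ≤ x) :
    IntervalIntegrable (fun t => (Real.exp t - 1) / t) volume 0 x := by
  rw [intervalIntegrable_iff_integrableOn_Ioc_of_le hx]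
  apply Measure.integrableOn_of_bounded (M := Real.exp x) measure_Ioc_lt_top.ne
  · exact ((Real.measurable_exp.sub measurable_const).div measurable_id).aestronglyMeasurable
  · filter_upwards [ae_restrict_mem measurableSet_Ioc] with t ht
    obtain ⟨ht0, htx⟩ := ht
    have h1 : (1:ℝ) ≤ Real.exp t := Real.one_le_exp ht0.le
    have h2 : Real.exp t - 1 ≤ t * Real.exp t := by
      have h3 := Real.add_one_le_exp (-t)
      have h4 : Real.exp (-t) * Real.exp t = 1 := by
        rw [← Real.exp_add]; simp
      nlinarith [Real.exp_pos t]
    have h5 : Real.exp t ≤ Real.exp x := Real.exp_le_exp.mpr htx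
    rw [Real.norm_eq_abs, abs_of_nonneg (div_nonneg (by linarith) ht0.le), div_le_iff₀ ht0]
    nlinarith [Real.exp_pos t]

lemma one_le_g {t : ℝ} (ht : 0 < t) : (1:ℝ) ≤ (Real.exp t - 1) / t := by
  rw [le_div_iff₀ ht]
  have := Real.add_one_le_exp t
  linarith

lemma hasDerivAt_Qlow (t : ℝ) :
    HasDerivAt (fun y : ℝ => y + y^2/4 + y^3/18 + y^4/96 + y^5/600 + y^6/4320 + y^7/35280)
      (1 + t/2 + t^2/6 + t^3/24 + t^4/120 + t^5/720 + t^6/5040) t := by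
  have h := ((((((hasDerivAt_id t).add ((hasDerivAt_pow 2 t).div_const 4)).add
      ((hasDerivAt_pow 3 t).div_const 18)).add ((hasDerivAt_pow 4 t).div_const 96)).add
      ((hasDerivAt_pow 5 t).div_const 600)).add ((hasDerivAt_pow 6 t).div_const 4320)).add
      ((hasDerivAt_pow 7 t).div_const 35280)
  refine h.congr_deriv ?_
  push_cast; ring_nf

lemma hasDerivAt_Qhi (t : ℝ) :
    HasDerivAt (fun y : ℝ => y + y^2/4 + y^3/18 + y^4/96 + y^5/600 + y^6/4320 + y^7/35280
        + y^7/246960)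
      (1 + t/2 + t^2/6 + t^3/24 + t^4/120 + t^5/720 + t^6/5040 + t^6/35280) t := by
  have h := (hasDerivAt_Qlow t).add ((hasDerivAt_pow 7 t).div_const 246960)
  refine h.congr_deriv ?_
  push_cast; ring_nf

lemma integral_plow {x : ℝ} (hx : 0 ≤ x) :
    ∫ t in (0:ℝ)..x, (1 + t/2 + t^2/6 + t^3/24 + t^4/120 + t^5/720 + t^6/5040)
      = x + x^2/4 + x^3/18 + x^4/96 + x^5/600 + x^6/4320 + x^7/35280 := by
  rw [intervalIntegral.integral_eq_sub_of_hasDerivAt (fun t _ => hasDerivAt_Qlow t)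
    (Continuous.intervalIntegrable (by continuity) _ _)]
  norm_num

lemma integral_phi {x : ℝ} (hx : 0 ≤ x) :
    ∫ t in (0:ℝ)..x, (1 + t/2 + t^2/6 + t^3/24 + t^4/120 + t^5/720 + t^6/5040 + t^6/35280)
      = x + x^2/4 + x^3/18 + x^4/96 + x^5/600 + x^6/4320 + x^7/35280 + x^7/246960 := by
  rw [intervalIntegral.integral_eq_sub_of_hasDerivAt (fun t _ => hasDerivAt_Qhi t)
    (Continuous.intervalIntegrable (by continuity) _ _)]
  norm_num

lemma plow_le_g {t : ℝ} (ht : 0 < t) :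
    1 + t/2 + t^2/6 + t^3/24 + t^4/120 + t^5/720 + t^6/5040 ≤ (Real.exp t - 1) / t := by
  rw [le_div_iff₀ ht]
  have h := Real.sum_le_exp_of_nonneg ht.le 8
  norm_num [Finset.sum_range_succ, Nat.factorial] at h
  nlinarith [h]

lemma g_le_phi {t : ℝ} (ht : 0 < t) (ht1 : t ≤ 1) :
    (Real.exp t - 1) / t ≤ 1 + t/2 + t^2/6 + t^3/24 + t^4/120 + t^5/720 + t^6/5040 + t^6/35280 := by
  rw [div_le_iff₀ ht]
  have h := Real.exp_bound' ht.le ht1 (n := 7) (by norm_num)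
  norm_num [Finset.sum_range_succ, Nat.factorial] at h
  nlinarith [h]

lemma F_lower {x : ℝ} (hx : 0 < x) :
    x + x^2/4 + x^3/18 + x^4/96 + x^5/600 + x^6/4320 + x^7/35280
      ≤ ∫ t in (0:ℝ)..x, (Real.exp t - 1) / t := by
  rw [← integral_plow hx.le]
  rw [intervalIntegral.integral_of_le hx.le, intervalIntegral.integral_of_le hx.le]
  apply setIntegral_mono_on
  · exact (Continuous.intervalIntegrable (by continuity) 0 x).1
  · exact ((intervalIntegrable_iff_integrableOn_Ioc_of_le hx.le).mp (g_intble hx.le))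
  · exact measurableSet_Ioc
  · exact fun t htt => plow_le_g htt.1

lemma F_upper {x : ℝ} (hx : 0 < x) (hx1 : x ≤ 1) :
    (∫ t in (0:ℝ)..x, (Real.exp t - 1) / t)
      ≤ x + x^2/4 + x^3/18 + x^4/96 + x^5/600 + x^6/4320 + x^7/35280 + x^7/246960 := by
  rw [← integral_phi hx.le]
  rw [intervalIntegral.integral_of_le hx.le, intervalIntegral.integral_of_le hx.le]
  apply setIntegral_mono_on
  · exact ((intervalIntegrable_iff_integrableOn_Ioc_of_le hx.le).mp (g_intble hx.le))
  · exact (Continuous.intervalIntegrable (by continuity) 0 x).1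
  · exact measurableSet_Ioc
  · exact fun t htt => g_le_phi htt.1 (le_trans htt.2 hx1)

lemma exp_a_lb : (2.2352469:ℝ) < Real.exp 0.8043517 := by
  have h := Real.sum_le_exp_of_nonneg (by norm_num : (0:ℝ) ≤ 0.8043517) 14
  refine lt_of_lt_of_le ?_ h
  norm_num [Finset.sum_range_succ, Nat.factorial]

lemma exp_b_ub : Real.exp 0.8043529 < 2.2352497 := by
  have h := Real.exp_bound' (by norm_num : (0:ℝ) ≤ 0.8043529) (by norm_num) (n := 14) (by norm_num)
  refine lt_of_le_of_lt h ?_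
  norm_num [Finset.sum_range_succ, Nat.factorial]

lemma exp_neg_a_ub : Real.exp (-0.8043517) < 0.4473779 := by
  refine lt_of_le_of_lt (exp_neg_le_eS (n := 13) (by decide) (by norm_num)) ?_
  norm_num [eS, Finset.sum_range_succ, Nat.factorial]

lemma exp_neg_b_lb : (0.4473773:ℝ) < Real.exp (-0.8043529) := by
  refine lt_of_lt_of_le ?_ (eS_le_exp_neg (n := 14) (by decide) (by norm_num))
  norm_num [eS, Finset.sum_range_succ, Nat.factorial]

lemma log10_lb : (2.302585:ℝ) < Real.log 10 := by
  rw [Real.lt_log_iff_exp_lt (by norm_num : (0:ℝ) < 10)]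
  have h4 : Real.exp 2.302585 = (Real.exp 0.57564625)^4 := by
    rw [← Real.exp_nat_mul]
    norm_num
  have hb : Real.exp 0.57564625 ≤ 1.7782794 := by
    have h := Real.exp_bound' (by norm_num : (0:ℝ) ≤ 0.57564625) (by norm_num) (n := 14)
      (by norm_num)
    refine le_trans h ?_
    norm_num [Finset.sum_range_succ, Nat.factorial]
  calc Real.exp 2.302585 = (Real.exp 0.57564625)^4 := h4
  _ ≤ 1.7782794^4 := by
      apply pow_le_pow_left₀ (Real.exp_pos _).le hb
  _ < 10 := by norm_num

lemma log10_ub : Real.log 10 < 2.3025851 := by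
  rw [Real.log_lt_iff_lt_exp (by norm_num : (0:ℝ) < 10)]
  have h4 : Real.exp 2.3025851 = (Real.exp 0.575646275)^4 := by
    rw [← Real.exp_nat_mul]
    norm_num
  have hb : (1.778279411:ℝ) ≤ Real.exp 0.575646275 := by
    have h := Real.sum_le_exp_of_nonneg (by norm_num : (0:ℝ) ≤ 0.575646275) 14
    refine le_trans ?_ h
    norm_num [Finset.sum_range_succ, Nat.factorial]
  calc (10:ℝ) < 1.778279411^4 := by norm_num
  _ ≤ (Real.exp 0.575646275)^4 := by
      apply pow_le_pow_left₀ (by norm_num) hb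
  _ = Real.exp 2.3025851 := h4.symm

lemma log_a_lb : (-0.2177187:ℝ) < Real.log 0.8043517 := by
  rw [Real.lt_log_iff_exp_lt (by norm_num : (0:ℝ) < 0.8043517)]
  have h : Real.exp (-0.2177187) ≤ eS 13 0.2177187 :=
    exp_neg_le_eS (n := 13) (by decide) (by norm_num : (0:ℝ) ≤ 0.2177187)
  refine lt_of_le_of_lt h ?_
  norm_num [eS, Finset.sum_range_succ, Nat.factorial]

lemma log_b_ub : Real.log 0.8043529 < -0.2177171 := by
  rw [Real.log_lt_iff_lt_exp (by norm_num : (0:ℝ) < 0.8043529)]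
  have h : eS 14 0.2177171 ≤ Real.exp (-0.2177171) :=
    eS_le_exp_neg (n := 14) (by decide) (by norm_num : (0:ℝ) ≤ 0.2177171)
  refine lt_of_lt_of_le ?_ h
  norm_num [eS, Finset.sum_range_succ, Nat.factorial]

lemma exp_neg10_ub : Real.exp (-10) ≤ 0.0000454 := by
  have h1 : (2.7182818283:ℝ)^10 ≤ (Real.exp 1)^10 :=
    pow_le_pow_left₀ (by norm_num) Real.exp_one_gt_d9.le 10
  have h2 : Real.exp (10:ℝ) = (Real.exp 1)^10 := by
    rw [← Real.exp_nat_mul]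
    norm_num
  have h3 : (0.0000454:ℝ)⁻¹ ≤ Real.exp 10 := by
    rw [h2]
    refine le_trans ?_ h1
    norm_num
  rw [Real.exp_neg]
  have h4 := inv_anti₀ (by norm_num : (0:ℝ) < (0.0000454:ℝ)⁻¹) h3
  simpa using h4
lemma hT37 : (-2.2121430:ℝ) < eT 37 10 - eT 37 (0.8043529:ℝ) := by
  norm_num [eT, Finset.sum_range_succ, Nat.factorial]

lemma hT36 : eT 36 10 - eT 36 (0.8043517:ℝ) < -2.2121424 := by
  norm_num [eT, Finset.sum_range_succ, Nat.factorial]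

lemma div_le_div_of_nonneg_right' {a b c : ℝ} (h : a ≤ b) (hc : 0 < c) : a / c ≤ b / c := by
  gcongr

end Stmt14Aux

open Stmt14Aux in
/-- For uniform `X`, with `s*` the root of `∫₀^s (e^t-1)/t dt = 1`, the
optimal probability `v(∞,s*) = (e^{s*} - s* - 1)·∫_{s*}^∞ e^{-t}/t dt + e^{-s*}`
satisfies `0.58 < v(∞,s*) < 0.581`. -/
theorem stmt14 (sstar : ℝ) (hs : 0 < sstar)
    (hroot : (∫ t in (0:ℝ)..sstar, (Real.exp t - 1) / t) = 1)
    (v : ℝ)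
    (hv : v = (Real.exp sstar - sstar - 1) * (∫ t in Set.Ioi sstar, Real.exp (-t) / t)
      + Real.exp (-sstar)) :
    0.58 < v ∧ v < 0.581 := by
  -- upper crude bound `sstar ≤ 1`
  have hs1 : sstar ≤ 1 := by
    by_contra hcon
    push_neg at hcon
    have h2 : ∫ t in (0:ℝ)..sstar, (1:ℝ) = sstar := by simp
    have h1 : (∫ t in (0:ℝ)..sstar, (1:ℝ)) ≤ ∫ t in (0:ℝ)..sstar, (Real.exp t - 1) / t := by
      rw [intervalIntegral.integral_of_le hs.le, intervalIntegral.integral_of_le hs.le]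
      apply setIntegral_mono_on
      · exact (_root_.intervalIntegrable_const (c := (1:ℝ))).1
      · exact (intervalIntegrable_iff_integrableOn_Ioc_of_le hs.le).mp (g_intble hs.le)
      · exact measurableSet_Ioc
      · exact fun t ht => one_le_g ht.1
    rw [h2, hroot] at h1
    linarith
  -- lower bound for sstar
  have ha : (0.8043517:ℝ) < sstar := by
    by_contra hcon
    push_neg at hcon
    have hsub : IntervalIntegrable (fun t => (Real.exp t - 1) / t) volume sstar 0.8043517 := by
      apply (g_intble (by norm_num : (0:ℝ) ≤ 0.8043517)).mono_set
      rw [uIcc_of_le hcon, uIcc_of_le (by norm_num : (0:ℝ) ≤ 0.8043517)]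
      exact Icc_subset_Icc hs.le le_rfl
    have hsplit := intervalIntegral.integral_add_adjacent_intervals (g_intble hs.le) hsub
    have hnn : 0 ≤ ∫ t in sstar..(0.8043517:ℝ), (Real.exp t - 1) / t := by
      apply intervalIntegral.integral_nonneg hcon
      intro u hu
      have hu0 : 0 < u := lt_of_lt_of_le hs hu.1
      linarith [one_le_g hu0]
    have hup := F_upper (show (0:ℝ) < 0.8043517 by norm_num) (by norm_num)
    have hQ : (0.8043517:ℝ) + 0.8043517^2/4 + 0.8043517^3/18 + 0.8043517^4/96
        + 0.8043517^5/600 + 0.8043517^6/4320 + 0.8043517^7/35280 + 0.8043517^7/246960 < 1 := by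
      norm_num
    rw [hroot] at hsplit
    linarith
  -- upper bound for sstar
  have hb : sstar < (0.8043529:ℝ) := by
    by_contra hcon
    push_neg at hcon
    have hsub : IntervalIntegrable (fun t => (Real.exp t - 1) / t) volume 0.8043529 sstar := by
      apply (g_intble hs.le).mono_set
      rw [uIcc_of_le hcon, uIcc_of_le hs.le]
      exact Icc_subset_Icc (by norm_num) le_rfl
    have hsplit := intervalIntegral.integral_add_adjacent_intervals
      (g_intble (by norm_num : (0:ℝ) ≤ 0.8043529)) hsub
    have hnn : 0 ≤ ∫ t in (0.8043529:ℝ)..sstar, (Real.exp t - 1) / t := by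
      apply intervalIntegral.integral_nonneg hcon
      intro u hu
      have hu0 : (0:ℝ) < u := lt_of_lt_of_le (by norm_num) hu.1
      linarith [one_le_g hu0]
    have hlow := F_lower (show (0:ℝ) < 0.8043529 by norm_num)
    have hQ : (1:ℝ) < 0.8043529 + 0.8043529^2/4 + 0.8043529^3/18 + 0.8043529^4/96
        + 0.8043529^5/600 + 0.8043529^6/4320 + 0.8043529^7/35280 := by
      norm_num
    rw [hroot] at hsplit
    linarith
  -- monotonicity of exp x - x
  have hmexp : ∀ u w : ℝ, 0 ≤ u → u ≤ w → Real.exp u - u ≤ Real.exp w - w := by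
    intro u w hu huw
    have h1 := Real.add_one_le_exp (w - u)
    have h2 : Real.exp u * Real.exp (w - u) = Real.exp w := by
      rw [← Real.exp_add]; ring_nf
    have h3 : 1 ≤ Real.exp u := Real.one_le_exp hu
    nlinarith
  have hX1 : Real.exp 0.8043517 - 0.8043517 ≤ Real.exp sstar - sstar :=
    hmexp _ _ (by norm_num) ha.le
  have hX2 : Real.exp sstar - sstar ≤ Real.exp 0.8043529 - 0.8043529 :=
    hmexp _ _ hs.le hb.le
  -- lower bound on the exponential integral
  have hIlb : (0.3081591:ℝ) ≤ ∫ t in Set.Ioi sstar, Real.exp (-t) / t := by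
    have h1 := E1_mono hs hb.le
    refine le_trans ?_ h1
    rw [split_integral (show (0:ℝ) < 0.8043529 by norm_num) (by norm_num : (0.8043529:ℝ) ≤ 10)]
    have ht := tail_nonneg 10 (by norm_num)
    have hcomp : (∫ t in (0.8043529:ℝ)..10, eS 38 t / t)
        ≤ ∫ t in (0.8043529:ℝ)..10, Real.exp (-t) / t := by
      apply intervalIntegral.integral_mono_on (by norm_num)
      · apply ContinuousOn.intervalIntegrable
        apply ContinuousOn.div (continuous_eS _).continuousOn continuousOn_id
        intro t htt
        rw [uIcc_of_le (by norm_num : (0.8043529:ℝ) ≤ 10)] at htt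
        exact (lt_of_lt_of_le (by norm_num) htt.1).ne'
      · apply ContinuousOn.intervalIntegrable
        apply ContinuousOn.div (Real.continuous_exp.comp continuous_neg).continuousOn
          continuousOn_id
        intro t htt
        rw [uIcc_of_le (by norm_num : (0.8043529:ℝ) ≤ 10)] at htt
        exact (lt_of_lt_of_le (by norm_num) htt.1).ne'
      · intro t htt
        have ht0 : (0:ℝ) < t := lt_of_lt_of_le (by norm_num) htt.1
        have hle := eS_le_exp_neg (n := 38) (by decide) ht0.le
        exact div_le_div_of_nonneg_right' hle ht0
    rw [integral_eS_div 37 (show (0:ℝ) < 0.8043529 by norm_num)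
      (by norm_num : (0.8043529:ℝ) ≤ 10)] at hcomp
    have hl1 := log10_lb
    have hl2 := log_b_ub
    have hl3 := hT37
    linarith
  -- upper bound on the exponential integral
  have hIub : (∫ t in Set.Ioi sstar, Real.exp (-t) / t) ≤ 0.3081660 := by
    have h1 := E1_mono (show (0:ℝ) < 0.8043517 by norm_num) ha.le
    refine le_trans h1 ?_
    rw [split_integral (show (0:ℝ) < 0.8043517 by norm_num) (by norm_num : (0.8043517:ℝ) ≤ 10)]
    have ht := tail_le
    have hcomp : (∫ t in (0.8043517:ℝ)..10, Real.exp (-t) / t)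
        ≤ ∫ t in (0.8043517:ℝ)..10, eS 37 t / t := by
      apply intervalIntegral.integral_mono_on (by norm_num)
      · apply ContinuousOn.intervalIntegrable
        apply ContinuousOn.div (Real.continuous_exp.comp continuous_neg).continuousOn
          continuousOn_id
        intro t htt
        rw [uIcc_of_le (by norm_num : (0.8043517:ℝ) ≤ 10)] at htt
        exact (lt_of_lt_of_le (by norm_num) htt.1).ne'
      · apply ContinuousOn.intervalIntegrable
        apply ContinuousOn.div (continuous_eS _).continuousOn continuousOn_id
        intro t htt
        rw [uIcc_of_le (by norm_num : (0.8043517:ℝ) ≤ 10)] at htt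
        exact (lt_of_lt_of_le (by norm_num) htt.1).ne'
      · intro t htt
        have ht0 : (0:ℝ) < t := lt_of_lt_of_le (by norm_num) htt.1
        have hle := exp_neg_le_eS (n := 37) (by decide) ht0.le
        exact div_le_div_of_nonneg_right' hle ht0
    rw [integral_eS_div 36 (show (0:ℝ) < 0.8043517 by norm_num)
      (by norm_num : (0.8043517:ℝ) ≤ 10)] at hcomp
    have hl1 := log10_ub
    have hl2 := log_a_lb
    have hl3 := hT36
    have hl4 := exp_neg10_ub
    linarith
  -- assemble
  have hexpa := exp_a_lb
  have hexpb := exp_b_ub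
  have hXlb : (0.4308952:ℝ) ≤ Real.exp sstar - sstar - 1 := by linarith
  have hXub : Real.exp sstar - sstar - 1 ≤ 0.4308968 := by linarith
  have hprod_lb : (0.4308952:ℝ) * 0.3081591 ≤ (Real.exp sstar - sstar - 1)
      * (∫ t in Set.Ioi sstar, Real.exp (-t) / t) :=
    mul_le_mul hXlb hIlb (by norm_num) (by linarith)
  have hprod_ub : (Real.exp sstar - sstar - 1) * (∫ t in Set.Ioi sstar, Real.exp (-t) / t)
      ≤ 0.4308968 * 0.3081660 :=
    mul_le_mul hXub hIub (by linarith) (by norm_num)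
  have hea : Real.exp (-sstar) < 0.4473779 :=
    lt_of_le_of_lt (Real.exp_le_exp.mpr (by linarith)) exp_neg_a_ub
  have heb : (0.4473773:ℝ) < Real.exp (-sstar) :=
    lt_of_lt_of_le exp_neg_b_lb (Real.exp_le_exp.mpr (by linarith))
  have hnum1 : (0.58:ℝ) < 0.4308952 * 0.3081591 + 0.4473773 := by norm_num
  have hnum2 : (0.4308968:ℝ) * 0.3081660 + 0.4473779 < 0.581 := by norm_num
  constructor
  · rw [hv]; linarith
  · rw [hv]; linarith
end
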